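/- arXiv:1807.05437 — 3 statements merged into one kernel-verified Lean document; each statement's English description precedes it below -/
import Mathlib

section
/- Let X be a non-atomic topological space with a topological basis {U_i : i ∈ I}, and let J ⊆ I be such that I \ J is finite. Then {U_j : j ∈ J} is also a topological basis for X. -/
lemma avoid_finite {X : Type*} [TopologicalSpace X]
    (h : ∀ (x : X) (U : Set X), IsOpen U → x ∈ U →
      ∃ V : Set X, IsOpen V ∧ x ∈ V ∧ V ⊂ U)
    (B : Set (Set X)) (hB : TopologicalSpace.IsTopologicalBasis B)
    (F : Set (Set X)) (hF : F.Finite) :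
    ∀ W : Set X, IsOpen W → ∀ x ∈ W, ∃ V ∈ B, x ∈ V ∧ V ⊆ W ∧ V ∉ F := by
  refine Set.Finite.induction_on F hF ?_ ?_
  · intro W hW x hx
    obtain ⟨V, hVB, hxV, hVW⟩ := hB.exists_subset_of_mem_open hx hW
    exact ⟨V, hVB, hxV, hVW, fun h => h⟩
  · intro A F hA hFfin ih W hW x hx
    obtain ⟨V, hVB, hxV, hVW, hVF⟩ := ih W hW x hx
    by_cases hVA : V = A
    · obtain ⟨V', hV'o, hxV', hV'V⟩ := h x V (hB.isOpen hVB) hxV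
      obtain ⟨V'', hV''B, hxV'', hV''V', hV''F⟩ := ih V' hV'o x hxV'
      refine ⟨V'', hV''B, hxV'', (hV''V'.trans hV'V.subset).trans hVW, ?_⟩
      intro hmem
      rcases Set.mem_insert_iff.mp hmem with h1 | h2
      · rw [h1, ← hVA] at hV''V'
        exact hV'V.not_subset hV''V'
      · exact hV''F h2
    · exact ⟨V, hVB, hxV, hVW, fun hmem =>
        (Set.mem_insert_iff.mp hmem).elim hVA hVF⟩

theorem stmt_3 {X ι : Type*} [TopologicalSpace X]
    (h : ∀ (x : X) (U : Set X), IsOpen U → x ∈ U →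
      ∃ V : Set X, IsOpen V ∧ x ∈ V ∧ V ⊂ U)
    (U : ι → Set X) (I J : Set ι) (hJI : J ⊆ I) (hfin : (I \ J).Finite)
    (hbasis : TopologicalSpace.IsTopologicalBasis (U '' I)) :
    TopologicalSpace.IsTopologicalBasis (U '' J) := by
  apply TopologicalSpace.isTopologicalBasis_of_isOpen_of_nhds
  · rintro _ ⟨j, hj, rfl⟩
    exact hbasis.isOpen ⟨j, hJI hj, rfl⟩
  · intro x W hx hW
    obtain ⟨V, hVB, hxV, hVW, hVF⟩ :=
      avoid_finite h (U '' I) hbasis (U '' (I \ J)) (hfin.image U) W hW x hx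
    obtain ⟨i, hiI, rfl⟩ := hVB
    refine ⟨U i, ⟨i, ?_, rfl⟩, hxV, hVW⟩
    by_contra hiJ
    exact hVF ⟨i, ⟨hiI, hiJ⟩, rfl⟩
end

section
/- Let V_1, V_2, ... be open subsets of a topological space X. For each k, let D_k be the collection of all sets of the form B ∪ C where B is a finite union of nonempty sets of the form ∩_{i=1}^k R_i with each R_i ∈ {V_i, exterior(V_i)} and not all R_i = exterior(V_i), and C is any subset of ∪_{i=1}^k boundary(V_i). Then D_k is a ring of sets: it contains the empty set and is closed under finite unions and set differences. -/
/-- The atom `∩_{i<k} R_i` determined by a choice function `R : Fin k → Bool`,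
where `R i = true` selects `V i` and `R i = false` selects the exterior of `V i`. -/
def atomSet {X : Type*} [TopologicalSpace X] (V : ℕ → Set X) (k : ℕ)
    (R : Fin k → Bool) : Set X :=
  ⋂ i : Fin k, if R i then V i.1 else interior (V i.1)ᶜ

/-- `B_k`: finite unions of nonempty atoms whose choice function is not all-exterior. -/
def Bcal {X : Type*} [TopologicalSpace X] (V : ℕ → Set X) (k : ℕ) : Set (Set X) :=
  {B | ∃ (n : ℕ) (f : Fin n → (Fin k → Bool)),
    (∀ j, ∃ i, f j i = true) ∧ (∀ j, (atomSet V k (f j)).Nonempty) ∧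
    B = ⋃ j, atomSet V k (f j)}

/-- `D_k`: sets of the form `B ∪ C` with `B ∈ B_k` and `C` a subset of the
union of the boundaries of `V_1, …, V_k`. -/
def Dcal {X : Type*} [TopologicalSpace X] (V : ℕ → Set X) (k : ℕ) : Set (Set X) :=
  {D | ∃ B ∈ Bcal V k, ∃ C ⊆ ⋃ i : Fin k, frontier (V i.1), D = B ∪ C}

lemma atom_disjoint_frontier {X : Type*} [TopologicalSpace X] {V : ℕ → Set X}
    (hV : ∀ i, IsOpen (V i)) {k : ℕ} {R : Fin k → Bool} {x : X}
    (hx : x ∈ atomSet V k R) (i : Fin k) : x ∉ frontier (V i.1) := by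
  intro hfx
  have hxi := Set.mem_iInter.1 hx i
  by_cases h : R i
  · simp only [h, if_true] at hxi
    exact hfx.2 (by rw [(hV i.1).interior_eq]; exact hxi)
  · simp only [h, if_false, interior_compl] at hxi
    exact hxi hfx.1

lemma atoms_disjoint {X : Type*} [TopologicalSpace X] {V : ℕ → Set X}
    {k : ℕ} {R R' : Fin k → Bool} (h : R ≠ R') :
    Disjoint (atomSet V k R) (atomSet V k R') := by
  obtain ⟨i, hi⟩ := Function.ne_iff.1 h
  rw [Set.disjoint_left]
  intro x hx hx'
  have h1 := Set.mem_iInter.1 hx i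
  have h2 := Set.mem_iInter.1 hx' i
  rcases Bool.eq_false_or_eq_true (R i) with hR | hR <;>
    rcases Bool.eq_false_or_eq_true (R' i) with hR' | hR' <;>
    rw [hR] at h1 hi <;> rw [hR'] at h2 hi <;> simp at h1 h2
  all_goals first
    | exact hi rfl
    | exact h2 (subset_closure h1)
    | exact h1 (subset_closure h2)

lemma Bcal_empty {X : Type*} [TopologicalSpace X] (V : ℕ → Set X) (k : ℕ) :
    (∅ : Set X) ∈ Bcal V k :=
  ⟨0, Fin.elim0, fun j => j.elim0, fun j => j.elim0, by simp⟩

lemma Bcal_union {X : Type*} [TopologicalSpace X] {V : ℕ → Set X} {k : ℕ}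
    {B B' : Set X} (hB : B ∈ Bcal V k) (hB' : B' ∈ Bcal V k) :
    B ∪ B' ∈ Bcal V k := by
  obtain ⟨n, f, hf1, hf2, rfl⟩ := hB
  obtain ⟨n', f', hf1', hf2', rfl⟩ := hB'
  refine ⟨n + n', fun j => Sum.elim f f' (finSumFinEquiv.symm j), ?_, ?_, ?_⟩
  · intro j; rcases h : finSumFinEquiv.symm j with a | b
    · simpa [h] using hf1 a
    · simpa [h] using hf1' b
  · intro j; rcases h : finSumFinEquiv.symm j with a | b
    · simpa [h] using hf2 a
    · simpa [h] using hf2' b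
  · rw [finSumFinEquiv.symm.surjective.iUnion_comp
      (g := fun s => atomSet V k (Sum.elim f f' s))]
    rw [Set.iUnion_sum]
    rfl

lemma Bcal_diff {X : Type*} [TopologicalSpace X] {V : ℕ → Set X} {k : ℕ}
    {B B' : Set X} (hB : B ∈ Bcal V k) (hB' : B' ∈ Bcal V k) :
    B \ B' ∈ Bcal V k := by
  classical
  obtain ⟨n, f, hf1, hf2, rfl⟩ := hB
  obtain ⟨n', f', hf1', hf2', rfl⟩ := hB'
  set s : Finset (Fin n) := Finset.univ.filter (fun j => ∀ j', f j ≠ f' j') with hs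
  refine ⟨s.card, fun m => f (s.equivFin.symm m).1, fun m => hf1 _, fun m => hf2 _, ?_⟩
  ext x
  simp only [Set.mem_diff, Set.mem_iUnion]
  constructor
  · rintro ⟨⟨j, hj⟩, hnot⟩
    have hjs : j ∈ s := by
      simp only [hs, Finset.mem_filter, Finset.mem_univ, true_and]
      intro j' hEq
      exact hnot ⟨j', hEq ▸ hj⟩
    refine ⟨s.equivFin ⟨j, hjs⟩, ?_⟩
    rw [Equiv.symm_apply_apply]
    exact hj
  · rintro ⟨m, hm⟩
    have hmem : (s.equivFin.symm m).1 ∈ s := (s.equivFin.symm m).2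
    simp only [hs, Finset.mem_filter, Finset.mem_univ, true_and] at hmem
    refine ⟨⟨_, hm⟩, ?_⟩
    rintro ⟨j', hj'⟩
    exact (atoms_disjoint (hmem j')).le_bot ⟨hm, hj'⟩

lemma Bcal_disjoint_frontier {X : Type*} [TopologicalSpace X] {V : ℕ → Set X}
    (hV : ∀ i, IsOpen (V i)) {k : ℕ} {B : Set X} (hB : B ∈ Bcal V k) {x : X}
    (hx : x ∈ B) : x ∉ ⋃ i : Fin k, frontier (V i.1) := by
  obtain ⟨n, f, hf1, hf2, rfl⟩ := hB
  obtain ⟨j, hj⟩ := Set.mem_iUnion.1 hx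
  intro hfr
  obtain ⟨i, hi⟩ := Set.mem_iUnion.1 hfr
  exact atom_disjoint_frontier hV hj i hi

theorem stmt_11 {X : Type*} [TopologicalSpace X] (V : ℕ → Set X)
    (hV : ∀ i, IsOpen (V i)) (k : ℕ) :
    MeasureTheory.IsSetRing (Dcal V k) := by
  constructor
  · exact ⟨∅, Bcal_empty V k, ∅, by simp, by simp⟩
  · rintro D D' ⟨B, hB, C, hC, rfl⟩ ⟨B', hB', C', hC', rfl⟩
    refine ⟨B ∪ B', Bcal_union hB hB', C ∪ C', Set.union_subset hC hC', ?_⟩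
    rw [Set.union_union_union_comm]
  · rintro D D' ⟨B, hB, C, hC, rfl⟩ ⟨B', hB', C', hC', rfl⟩
    refine ⟨B \ B', Bcal_diff hB hB', (C \ (B' ∪ C')) , ?_, ?_⟩
    · exact (Set.diff_subset).trans hC
    · ext x
      simp only [Set.mem_diff, Set.mem_union]
      constructor
      · rintro ⟨hx, hnot⟩
        push_neg at hnot
        rcases hx with hx | hx
        · exact Or.inl ⟨hx, hnot.1⟩
        · exact Or.inr ⟨hx, fun h => h.elim hnot.1 hnot.2⟩
      · rintro (⟨hx, hnB'⟩ | ⟨hx, hnD'⟩)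
        · refine ⟨Or.inl hx, ?_⟩
          rintro (h | h)
          · exact hnB' h
          · exact Bcal_disjoint_frontier hV hB hx (hC' h)
        · exact ⟨Or.inr hx, hnD'⟩
end

section
/- Let X be a second-countable non-atomic locally compact Hausdorff space equipped with its Borel σ-algebra. Then there exists a finite measure μ on X that is regular, non-atomic, and strictly positive (every nonempty open set has positive measure). -/
open MeasureTheory

open Set Function Topology Filter
open scoped ENNReal

lemma cantor_not_countable : ¬ Countable (ℕ → Bool) := by
  intro h
  obtain ⟨f, hf⟩ := exists_surjective_nat (ℕ → Bool)
  obtain ⟨n, hn⟩ := hf (fun k => !(f k k))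
  have := congrFun hn n
  simp at this

/-- Key local construction: a probability-like measure without atoms giving
positive mass to a given nonempty open set. -/
lemma exists_noatom_measure_on_open {X : Type*} [TopologicalSpace X]
    [SecondCountableTopology X] [LocallyCompactSpace X] [T2Space X]
    [MeasurableSpace X] [BorelSpace X]
    (hna : ∀ (x : X) (U : Set X), IsOpen U → x ∈ U →
      ∃ V : Set X, IsOpen V ∧ x ∈ V ∧ V ⊂ U)
    {U : Set X} (hU : IsOpen U) (hne : U.Nonempty) :
    ∃ ν : Measure X, ν univ ≤ 1 ∧ (∀ x, ν {x} = 0) ∧ 0 < ν U := by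
  obtain ⟨x, hx⟩ := hne
  obtain ⟨K, hK, hxK, hKU⟩ := exists_compact_subset hU hx
  letI : MetricSpace K := TopologicalSpace.metrizableSpaceMetric K
  haveI : CompactSpace K := isCompact_iff_compactSpace.mp hK
  haveI : PolishSpace K := inferInstance
  -- the open subset `interior K` pulled back to the subtype
  set V : Set K := Subtype.val ⁻¹' (interior K) with hV
  have hxV : (⟨x, interior_subset hxK⟩ : K) ∈ V := hxK
  -- V is preperfect
  have hpre : Preperfect V := by
    intro y hyV
    rw [accPt_iff_nhds]
    intro N hN
    rw [mem_nhds_subtype] at hN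
    obtain ⟨M, hM, hMN⟩ := hN
    obtain ⟨M', hM'M, hM'open, hyM'⟩ := mem_nhds_iff.mp hM
    have hyO : (y : X) ∈ M' ∩ interior K := ⟨hyM', hyV⟩
    obtain ⟨V', hV'open, hyV', hV'sub⟩ :=
      hna (y : X) (M' ∩ interior K) (hM'open.inter isOpen_interior) hyO
    obtain ⟨z, hzO, hzV'⟩ := exists_of_ssubset hV'sub
    have hzK : z ∈ K := interior_subset hzO.2
    refine ⟨⟨z, hzK⟩, ⟨hMN ?_, hzO.2⟩, ?_⟩
    · exact hM'M hzO.1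
    · intro hzy
      apply hzV'
      rw [show z = (y : X) from congrArg Subtype.val hzy]
      exact hyV'
  have hperf : Perfect (closure V) := hpre.perfect_closure
  have hcne : (closure V).Nonempty := ⟨_, subset_closure hxV⟩
  obtain ⟨f, hfr, hfc, hfi⟩ := hperf.exists_nat_bool_injection hcne
  have hKnc : ¬ Countable K := by
    intro h
    exact cantor_not_countable hfi.countable
  haveI : StandardBorelSpace K := inferInstance
  have hRnc : ¬ Countable ℝ := by
    rw [not_countable_iff]; infer_instance
  let e : ℝ ≃ᵐ K := PolishSpace.measurableEquivOfNotCountable hRnc hKnc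
  let φ : ℝ → X := fun r => (e r : X)
  have hφmeas : Measurable φ := measurable_subtype_coe.comp e.measurable
  have hφinj : Function.Injective φ := Subtype.val_injective.comp e.injective
  refine ⟨Measure.map φ (volume.restrict (Icc (0:ℝ) 1)), ?_, ?_, ?_⟩
  · rw [Measure.map_apply hφmeas MeasurableSet.univ, preimage_univ,
      Measure.restrict_apply MeasurableSet.univ, univ_inter, Real.volume_Icc]
    simp
  · intro y
    rw [Measure.map_apply hφmeas (measurableSet_singleton y)]
    have hsub : (φ ⁻¹' {y}).Subsingleton := by
      intro a ha b hb
      exact hφinj (ha.trans hb.symm)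
    exact hsub.measure_zero _
  · rw [Measure.map_apply hφmeas hU.measurableSet]
    have : φ ⁻¹' U = univ := by
      ext r
      simp only [mem_preimage, mem_univ, iff_true]
      exact hKU (e r).2
    rw [this, Measure.restrict_apply MeasurableSet.univ, univ_inter, Real.volume_Icc]
    norm_num

theorem stmt_18 {X : Type*} [TopologicalSpace X] [SecondCountableTopology X]
    [LocallyCompactSpace X] [T2Space X] [MeasurableSpace X] [BorelSpace X]
    (hna : ∀ (x : X) (U : Set X), IsOpen U → x ∈ U →
      ∃ V : Set X, IsOpen V ∧ x ∈ V ∧ V ⊂ U) :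
    ∃ μ : Measure X, IsFiniteMeasure μ ∧ μ.OuterRegular ∧ μ.InnerRegular ∧
      (∀ A : Set X, MeasurableSet A → 0 < μ A →
        ∃ B : Set X, MeasurableSet B ∧ B ⊆ A ∧ 0 < μ B ∧ μ B < μ A) ∧
      (∀ U : Set X, IsOpen U → U.Nonempty → 0 < μ U) := by
  rcases isEmpty_or_nonempty X with hX | hX
  · refine ⟨0, inferInstance, inferInstance, inferInstance, ?_, ?_⟩
    · intro A _ h; simp at h
    · rintro U _ ⟨x, -⟩; exact (IsEmpty.false x).elim
  -- setup: enumerate a countable basis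
  have hBasis := TopologicalSpace.isBasis_countableBasis X
  have hBc : (TopologicalSpace.countableBasis X).Countable :=
    TopologicalSpace.countable_countableBasis X
  have hBne : (TopologicalSpace.countableBasis X).Nonempty := by
    obtain ⟨t, htB, -, -⟩ :=
      hBasis.exists_subset_of_mem_open (mem_univ hX.some) isOpen_univ
    exact ⟨t, htB⟩
  obtain ⟨s, hs⟩ := hBc.exists_eq_range hBne
  have hsopen : ∀ n, IsOpen (s n) := fun n =>
    TopologicalSpace.isOpen_of_mem_countableBasis (by rw [hs]; exact mem_range_self n)
  have hνex : ∀ n, ∃ ν : Measure X, ν univ ≤ 1 ∧ (∀ x, ν {x} = 0) ∧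
      ((s n).Nonempty → 0 < ν (s n)) := by
    intro n
    by_cases h : (s n).Nonempty
    · obtain ⟨ν, h1, h2, h3⟩ := exists_noatom_measure_on_open hna (hsopen n) h
      exact ⟨ν, h1, h2, fun _ => h3⟩
    · exact ⟨0, by simp, by simp, fun hc => absurd hc h⟩
  choose ν hν1 hν2 hν3 using hνex
  set c : ℕ → ℝ≥0∞ := fun n => (2:ℝ≥0∞)⁻¹ ^ (n + 1) with hc
  have hcpos : ∀ n, 0 < c n := fun n => by
    apply ENNReal.pow_pos; simp
  have hcle : ∀ n, c n ≤ (2:ℝ≥0∞)⁻¹ ^ n := fun n => by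
    show (2:ℝ≥0∞)⁻¹ ^ (n+1) ≤ (2:ℝ≥0∞)⁻¹ ^ n
    rw [pow_succ]
    calc (2:ℝ≥0∞)⁻¹ ^ n * 2⁻¹ ≤ (2:ℝ≥0∞)⁻¹ ^ n * 1 := by
          gcongr; exact ENNReal.inv_le_one.mpr one_le_two
      _ = (2:ℝ≥0∞)⁻¹ ^ n := mul_one _
  set μ : Measure X := Measure.sum (fun n => c n • ν n) with hμ
  have hμapp : ∀ (A : Set X), MeasurableSet A → μ A = ∑' n, c n * ν n A := by
    intro A hA
    rw [hμ, Measure.sum_apply _ hA]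
    rfl
  haveI hfin : IsFiniteMeasure μ := by
    constructor
    rw [hμapp univ MeasurableSet.univ]
    calc ∑' n, c n * ν n univ ≤ ∑' n, (2:ℝ≥0∞)⁻¹ ^ n := by
          apply ENNReal.tsum_le_tsum
          intro n
          calc c n * ν n univ ≤ c n * 1 := by gcongr; exact hν1 n
            _ = c n := mul_one _
            _ ≤ (2:ℝ≥0∞)⁻¹ ^ n := hcle n
      _ = (1 - 2⁻¹)⁻¹ := ENNReal.tsum_geometric _
      _ < ⊤ := by
          rw [ENNReal.one_sub_inv_two]
          simp
  have hatoms : ∀ x : X, μ {x} = 0 := by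
    intro x
    rw [hμapp _ (measurableSet_singleton x)]
    simp [hν2]
  refine ⟨μ, hfin, ?_, ?_, ?_, ?_⟩
  · -- outer regular
    haveI : μ.Regular := inferInstance
    infer_instance
  · -- inner regular
    infer_instance
  · -- non-atomicity
    intro A hA hpos
    set ρ := μ.restrict A with hρ
    have hρle : ∀ (t : Set X), ρ t ≤ μ t := fun t => Measure.le_iff'.1 Measure.restrict_le_self t
    have hρuniv : ρ univ = μ A := by
      rw [hρ, Measure.restrict_apply MeasurableSet.univ, univ_inter]
    set 𝒪 : Set (Set X) := {O | IsOpen O ∧ ρ O = 0} with h𝒪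
    obtain ⟨T, hTc, hTsub, hTU⟩ :=
      TopologicalSpace.isOpen_sUnion_countable 𝒪 (fun O hO => hO.1)
    set W := ⋃₀ 𝒪 with hW
    have hW0 : ρ W = 0 := by
      rw [← hTU]
      exact (measure_sUnion_null_iff hTc).mpr (fun t ht => (hTsub ht).2)
    have hWcpos : 0 < ρ Wᶜ := by
      rcases eq_zero_or_pos (ρ Wᶜ) with h | h
      · exfalso
        have : ρ univ ≤ ρ W + ρ Wᶜ := by
          rw [← union_compl_self W]; exact measure_union_le _ _
        rw [hW0, h, add_zero, hρuniv] at this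
        exact absurd (le_antisymm this zero_le) hpos.ne'
      · exact h
    have key : ∀ y ∈ Wᶜ, ∀ O : Set X, IsOpen O → y ∈ O → 0 < ρ O := by
      intro y hy O hO hyO
      rcases eq_zero_or_pos (ρ O) with h | h
      · have hmem : O ∈ 𝒪 := by rw [h𝒪]; exact ⟨hO, h⟩
        exact absurd (mem_sUnion.mpr ⟨O, hmem, hyO⟩) hy
      · exact h
    have h2 : ∃ y ∈ Wᶜ, ∃ z ∈ Wᶜ, y ≠ z := by
      by_contra h
      push_neg at h
      have hne : Wᶜ.Nonempty := nonempty_of_measure_ne_zero hWcpos.ne'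
      obtain ⟨y, hy⟩ := hne
      have hsub : Wᶜ ⊆ {y} := by
        intro z hz
        have := h y hy z hz
        simp [this.symm]
      have : ρ Wᶜ ≤ ρ {y} := measure_mono hsub
      have h0 : ρ {y} = 0 := le_antisymm ((hρle {y}).trans (hatoms y).le) zero_le
      rw [h0] at this
      exact absurd (le_antisymm this zero_le) hWcpos.ne'
    obtain ⟨y, hy, z, hz, hyz⟩ := h2
    obtain ⟨Oy, Oz, hOy, hOz, hyOy, hzOz, hdisj⟩ := t2_separation hyz
    have hρy := key y hy Oy hOy hyOy
    have hρz := key z hz Oz hOz hzOz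
    have hρOyA : ρ Oy = μ (A ∩ Oy) := by
      rw [hρ, Measure.restrict_apply hOy.measurableSet, inter_comm]
    refine ⟨A ∩ Oy, hA.inter hOy.measurableSet, inter_subset_left, ?_, ?_⟩
    · rw [← hρOyA]; exact hρy
    · have hfinite : ρ Oy ≠ ⊤ := ((hρle Oy).trans_lt (measure_lt_top μ Oy)).ne
      calc μ (A ∩ Oy) = ρ Oy := hρOyA.symm
        _ < ρ Oy + ρ Oz := ENNReal.lt_add_right hfinite hρz.ne'
        _ = ρ (Oy ∪ Oz) := (measure_union hdisj hOz.measurableSet).symm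
        _ ≤ ρ univ := measure_mono (subset_univ _)
        _ = μ A := hρuniv
  · -- strict positivity
    intro U hU hUne
    obtain ⟨x, hx⟩ := hUne
    obtain ⟨t, htB, hxt, htU⟩ := hBasis.exists_subset_of_mem_open hx hU
    have : t ∈ range s := by rw [← hs]; exact htB
    obtain ⟨n, hn⟩ := this
    have hpos := hν3 n ⟨x, by rw [hn]; exact hxt⟩
    have h1 : 0 < c n * ν n (s n) := ENNReal.mul_pos (hcpos n).ne' hpos.ne'
    have h2 : c n * ν n (s n) ≤ c n * ν n U := by
      have hsub : s n ⊆ U := by rw [hn]; exact htU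
      gcongr
    have h3 : (c n • ν n) U ≤ μ U := Measure.le_iff'.1 (Measure.le_sum _ n) U
    calc (0:ℝ≥0∞) < c n * ν n (s n) := h1
      _ ≤ c n * ν n U := h2
      _ = (c n • ν n) U := rfl
      _ ≤ μ U := h3
end
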